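/- For all real t > 0, the function h(t) = e^{1/t} - ψ'(t) is positive, where ψ' is the trigamma function. -/

import Mathlib

open Real Filter

private lemma telescope_hasSum (t : ℝ) (ht : 0 < t) :
    HasSum (fun n : ℕ => 1 / (t + n) - 1 / (t + n + 1)) (1 / t) := by
  have hpos : ∀ n : ℕ, (0:ℝ) < t + n := fun n => by positivity
  have hnn : ∀ n : ℕ, 0 ≤ 1 / (t + n) - 1 / (t + n + 1) := by
    intro n
    have h1 : (0:ℝ) < t + n := hpos n
    have h2 : (0:ℝ) < t + n + 1 := by linarith
    have : 1 / (t + n + 1) ≤ 1 / (t + n) := by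
      apply one_div_le_one_div_of_le h1; linarith
    linarith
  rw [hasSum_iff_tendsto_nat_of_nonneg hnn]
  have key : ∀ n : ℕ, ∑ i ∈ Finset.range n, (1 / (t + i) - 1 / (t + i + 1))
      = 1 / t - 1 / (t + n) := by
    intro n
    have := Finset.sum_range_sub' (fun i : ℕ => 1 / (t + i)) n
    simp only [Nat.cast_zero, add_zero, Nat.cast_add, Nat.cast_one] at this
    rw [← this]
    apply Finset.sum_congr rfl
    intro i _
    push_cast
    ring_nf
  simp only [key]
  have : Tendsto (fun n : ℕ => 1 / (t + n)) atTop (nhds 0) := by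
    simp_rw [one_div]
    exact Tendsto.inv_tendsto_atTop
      (tendsto_atTop_add_const_left _ t tendsto_natCast_atTop_atTop)
  have h2 := (tendsto_const_nhds (x := 1/t) (f := atTop (α := ℕ))).sub this
  simpa using h2

theorem stmt_7 : ∀ t : ℝ, 0 < t →
    0 < Real.exp (1 / t) - ∑' n : ℕ, 1 / (t + n) ^ 2 := by
  intro t ht
  have hpos : ∀ n : ℕ, (0:ℝ) < t + n := fun n => by positivity
  set g : ℕ → ℝ := fun n => 1 / (t + n) ^ 2 with hg
  set d : ℕ → ℝ := fun n => 1 / (t + n) - 1 / (t + n + 1) with hd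
  have hdsum : HasSum d (1 / t) := telescope_hasSum t ht
  have hdeq : ∀ n : ℕ, d n = 1 / ((t + n) * (t + n + 1)) := by
    intro n
    have h1 := (hpos n).ne'
    have h2 : (t + n + 1) ≠ 0 := by have := hpos n; positivity
    simp only [hd]; rw [div_sub_div _ _ h1 h2]; congr 1 <;> ring
  have hle : ∀ n : ℕ, g (n + 1) ≤ d n := by
    intro n
    rw [hdeq n]
    have h1 := hpos n
    have h2 : (0:ℝ) < t + n + 1 := by linarith
    have : g (n + 1) = 1 / (t + n + 1) ^ 2 := by
      simp [hg]; push_cast; ring_nf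
    rw [this]
    apply one_div_le_one_div_of_le (by positivity)
    nlinarith
  have hgnn : ∀ n : ℕ, 0 ≤ g n := fun n => by positivity
  have hsum_shift : Summable (fun n => g (n + 1)) :=
    Summable.of_nonneg_of_le (fun n => hgnn _) hle hdsum.summable
  have hsumg : Summable g := (summable_nat_add_iff 1).mp hsum_shift
  have htsum : ∑' n, g n = g 0 + ∑' n, g (n + 1) := Summable.tsum_eq_zero_add hsumg
  have hshift_le : ∑' n, g (n + 1) ≤ 1 / t := by
    rw [← hdsum.tsum_eq]
    exact Summable.tsum_le_tsum hle hsum_shift hdsum.summable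
  have hg0 : g 0 = 1 / t ^ 2 := by simp [hg]
  have hbound : ∑' n, g n ≤ 1 / t ^ 2 + 1 / t := by
    rw [htsum, hg0]; linarith
  have hexp : 1 + 1/t + (1/t) ^ 2 / 2 + (1/t) ^ 3 / 6 ≤ Real.exp (1 / t) := by
    have h := Real.sum_le_exp_of_nonneg (x := 1/t) (by positivity) 4
    simp [Finset.sum_range_succ, Nat.factorial] at h
    rw [one_div]
    convert h using 1
    ring
  have hpoly : 1 / t ^ 2 + 1 / t < 1 + 1/t + (1/t) ^ 2 / 2 + (1/t) ^ 3 / 6 := by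
    set x := 1/t with hx
    have hxpos : 0 < x := by positivity
    have h2 : 1 / t ^ 2 = x ^ 2 := by rw [hx]; ring
    rw [h2]
    nlinarith [mul_nonneg (sq_nonneg (x - 2)) hxpos.le]
  linarith
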